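/- arXiv:1807.00393 — 2 statements merged into one kernel-verified Lean document; each statement's English description precedes it below -/
import Mathlib

section
/- Let f_1, …, f_K : ℝ^d → ℝ and φ_1, …, φ_K : ℝ^d → ℝ be continuously differentiable, let x_1, …, x_n ∈ ℝ^d and y_1, …, y_m ∈ ℝ^d, and for α, β ∈ ℝ^K define T_α(x) = x + Σ_{l=1}^K α_l ∇φ_l(x) and L(α, β) = (1/n) Σ_{i=1}^n Σ_{k=1}^K β_k f_k(T_α(x_i)) − (1/m) Σ_{j=1}^m exp(Σ_{k=1}^K β_k f_k(y_j)). Suppose (α, β) is a critical point of L (all partial derivatives in α and β vanish) and the matrix C(α) ∈ ℝ^{K×K} with entries C(α)_{l k} = (1/n) Σ_{i=1}^n ∇φ_l(x_i) · ∇f_k(T_α(x_i)) is nonsingular. Then β = 0 and the transported sample matches the target sample on all features: for every k ∈ {1, …, K}, (1/n) Σ_{i=1}^n f_k(T_α(x_i)) = (1/m) Σ_{j=1}^m f_k(y_j). -/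
open scoped BigOperators

/-- The parametrized transport map `T_α(x) = x + ∑ l, α l • ∇φ_l(x)`. -/
noncomputable def Tmap {d K : ℕ} (φ : Fin K → EuclideanSpace ℝ (Fin d) → ℝ)
    (α : Fin K → ℝ) (z : EuclideanSpace ℝ (Fin d)) : EuclideanSpace ℝ (Fin d) :=
  z + ∑ l, α l • gradient (φ l) z

/-- The sample-based Lagrangian
`L(α, β) = (1/n) ∑ i ∑ k, β k * f k (T_α xᵢ) - (1/m) ∑ j, exp (∑ k, β k * f k (y j))`. -/
noncomputable def Lag {d K n m : ℕ}
    (f φ : Fin K → EuclideanSpace ℝ (Fin d) → ℝ)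
    (x : Fin n → EuclideanSpace ℝ (Fin d)) (y : Fin m → EuclideanSpace ℝ (Fin d))
    (α β : Fin K → ℝ) : ℝ :=
  (1 / (n : ℝ)) * ∑ i, ∑ k, β k * f k (Tmap φ α (x i))
    - (1 / (m : ℝ)) * ∑ j, Real.exp (∑ k, β k * f k (y j))

/-- The matrix `C(α)` with entries
`C(α)_{l k} = (1/n) ∑ i, ⟪∇φ_l(xᵢ), ∇f_k(T_α(xᵢ))⟫`. -/
noncomputable def Cmat {d K n : ℕ}
    (f φ : Fin K → EuclideanSpace ℝ (Fin d) → ℝ)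
    (x : Fin n → EuclideanSpace ℝ (Fin d)) (α : Fin K → ℝ) :
    Matrix (Fin K) (Fin K) ℝ :=
  Matrix.of fun l k =>
    (1 / (n : ℝ)) * ∑ i, (inner ℝ (gradient (φ l) (x i)) (gradient (f k) (Tmap φ α (x i))) : ℝ)

/-- The inner product against the gradient recovers the Fréchet derivative. -/
lemma inner_gradient_eq_fderiv {d : ℕ} (h : EuclideanSpace ℝ (Fin d) → ℝ)
    (z v : EuclideanSpace ℝ (Fin d)) :
    (inner ℝ (gradient h z) v : ℝ) = fderiv ℝ h z v :=
  InnerProductSpace.toDual_symm_apply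

/-- If `(α, β)` is a critical point of the Lagrangian (all partial derivatives in `α`
and `β` vanish) and the matrix `C(α)` is nonsingular, then `β = 0` and the transported
sample matches the target sample on all features:
`(1/n) ∑ i, f k (T_α xᵢ) = (1/m) ∑ j, f k (y j)` for every `k`. -/
theorem critical_point_feature_matching {d K n m : ℕ}
    (f φ : Fin K → EuclideanSpace ℝ (Fin d) → ℝ)
    (hf : ∀ k, ContDiff ℝ 1 (f k)) (hφ : ∀ l, ContDiff ℝ 1 (φ l))
    (x : Fin n → EuclideanSpace ℝ (Fin d)) (y : Fin m → EuclideanSpace ℝ (Fin d))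
    (α β : Fin K → ℝ)
    (hcritα : ∀ l : Fin K,
      fderiv ℝ (fun a => Lag f φ x y a β) α (Pi.single l 1) = 0)
    (hcritβ : ∀ k : Fin K,
      fderiv ℝ (fun b => Lag f φ x y α b) β (Pi.single k 1) = 0)
    (hC : (Cmat f φ x α).det ≠ 0) :
    β = 0 ∧
    ∀ k : Fin K,
      (1 / (n : ℝ)) * ∑ i, f k (Tmap φ α (x i))
        = (1 / (m : ℝ)) * ∑ j, f k (y j) := by
  classical
  set g : Fin K → Fin n → EuclideanSpace ℝ (Fin d) := fun l i => gradient (φ l) (x i) with hg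
  set T : Fin n → EuclideanSpace ℝ (Fin d) := fun i => Tmap φ α (x i) with hT
  -- the derivative of `a ↦ T_a(xᵢ)`
  set L : Fin n → (Fin K → ℝ) →L[ℝ] EuclideanSpace ℝ (Fin d) :=
    fun i => ∑ l, (ContinuousLinearMap.proj l : (Fin K → ℝ) →L[ℝ] ℝ).smulRight (g l i) with hL
  have hproj : ∀ (z : Fin K → ℝ) (l : Fin K),
      HasFDerivAt (fun a : Fin K → ℝ => a l)
        (ContinuousLinearMap.proj l : (Fin K → ℝ) →L[ℝ] ℝ) z := fun z l =>
    (ContinuousLinearMap.proj l : (Fin K → ℝ) →L[ℝ] ℝ).hasFDerivAt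
  have hTd : ∀ i, HasFDerivAt (fun a : Fin K → ℝ => Tmap φ a (x i)) (L i) α := by
    intro i
    have : (fun a : Fin K → ℝ => Tmap φ a (x i)) = fun a => x i + ∑ l, a l • g l i := rfl
    rw [this]
    exact (HasFDerivAt.fun_sum fun l _ => (hproj α l).smul_const (g l i)).const_add _
  have hfT : ∀ i k, HasFDerivAt (fun a => f k (Tmap φ a (x i)))
      ((fderiv ℝ (f k) (T i)).comp (L i)) α := by
    intro i k
    have := (((hf k).differentiable one_ne_zero (T i)).hasFDerivAt).comp α (hTd i)
    simpa [Function.comp_def] using this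
  have hLag : HasFDerivAt (fun a => Lag f φ x y a β)
      ((1 / (n : ℝ)) • ∑ i, ∑ k, (β k) • ((fderiv ℝ (f k) (T i)).comp (L i))) α := by
    have he : (fun a => Lag f φ x y a β)
        = fun a => (1 / (n : ℝ)) * ∑ i, ∑ k, β k * f k (Tmap φ a (x i))
          - (1 / (m : ℝ)) * ∑ j, Real.exp (∑ k, β k * f k (y j)) := rfl
    rw [he]
    exact ((HasFDerivAt.fun_sum fun i _ =>
      HasFDerivAt.fun_sum fun k _ => (hfT i k).const_mul (β k)).const_mul _).sub_const _
  have hLeval : ∀ i l, (L i) (Pi.single l 1) = g l i := by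
    intro i l
    simp only [hL, ContinuousLinearMap.sum_apply, ContinuousLinearMap.smulRight_apply,
      ContinuousLinearMap.proj_apply, Pi.single_apply, ite_smul, one_smul, zero_smul]
    simp
  have hval : ∀ l, (1 / (n : ℝ)) * ∑ i, ∑ k, β k * fderiv ℝ (f k) (T i) (g l i) = 0 := by
    intro l
    have h := hcritα l
    rw [hLag.fderiv] at h
    simpa only [ContinuousLinearMap.smul_apply, ContinuousLinearMap.sum_apply,
      ContinuousLinearMap.coe_comp', Function.comp_apply, hLeval, smul_eq_mul] using h
  have hmv : (Cmat f φ x α).mulVec β = 0 := by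
    funext l
    have swap : ∀ F : Fin n → Fin K → ℝ,
        ∑ k, ((1 / (n : ℝ)) * ∑ i, F i k) * β k
          = (1 / (n : ℝ)) * ∑ i, ∑ k, β k * F i k := by
      intro F
      simp only [Finset.mul_sum, Finset.sum_mul]
      rw [Finset.sum_comm]
      exact Finset.sum_congr rfl fun i _ => Finset.sum_congr rfl fun k _ => by ring
    have key : ∑ k, (Cmat f φ x α) l k * β k = 0 := by
      have hC' : ∀ k, (Cmat f φ x α) l k
          = (1 / (n : ℝ)) * ∑ i, fderiv ℝ (f k) (T i) (g l i) := by
        intro k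
        simp only [Cmat, Matrix.of_apply]
        congr 1
        exact Finset.sum_congr rfl fun i _ => by
          rw [real_inner_comm, inner_gradient_eq_fderiv]
      simp only [hC']
      rw [swap (fun i k => fderiv ℝ (f k) (T i) (g l i))]
      exact hval l
    simpa [Matrix.mulVec, dotProduct] using key
  have hβ : β = 0 := Matrix.eq_zero_of_mulVec_eq_zero hC hmv
  subst hβ
  refine ⟨rfl, fun k => ?_⟩
  -- the β-derivative at β = 0
  have hLagβ : HasFDerivAt (fun b : Fin K → ℝ => Lag f φ x y α b)
      ((1 / (n : ℝ)) • ∑ i, ∑ k', (f k' (T i)) •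
          (ContinuousLinearMap.proj k' : (Fin K → ℝ) →L[ℝ] ℝ)
        - (1 / (m : ℝ)) • ∑ j, Real.exp (∑ k', (0 : Fin K → ℝ) k' * f k' (y j)) •
            ∑ k', (f k' (y j)) • (ContinuousLinearMap.proj k' : (Fin K → ℝ) →L[ℝ] ℝ))
      (0 : Fin K → ℝ) := by
    have he : (fun b : Fin K → ℝ => Lag f φ x y α b)
        = fun b => (1 / (n : ℝ)) * ∑ i, ∑ k', b k' * f k' (T i)
          - (1 / (m : ℝ)) * ∑ j, Real.exp (∑ k', b k' * f k' (y j)) := rfl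
    rw [he]
    refine HasFDerivAt.sub ?_ ?_
    · exact (HasFDerivAt.fun_sum fun i _ => HasFDerivAt.fun_sum fun k' _ =>
        (hproj 0 k').mul_const (f k' (T i))).const_mul _
    · exact (HasFDerivAt.fun_sum fun j _ =>
        (HasFDerivAt.fun_sum fun k' _ =>
          (hproj 0 k').mul_const (f k' (y j))).exp).const_mul _
  have h := hcritβ k
  rw [hLagβ.fderiv] at h
  simp only [ContinuousLinearMap.sub_apply, ContinuousLinearMap.smul_apply,
    ContinuousLinearMap.sum_apply, ContinuousLinearMap.proj_apply, smul_eq_mul,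
    Pi.single_apply, mul_ite, mul_one, mul_zero, Finset.sum_ite_eq', Finset.mem_univ,
    if_true, Pi.zero_apply, zero_mul, Finset.sum_const_zero, Real.exp_zero, one_mul] at h
  linarith [h]
end

section
/- Let μ and ν be probability measures on ℝ^d with μ absolutely continuous with respect to Lebesgue measure, and suppose there exists a convex, everywhere differentiable φ₀ : ℝ^d → ℝ with (∇φ₀)_#μ = ν. Let Φ be the class of convex, everywhere differentiable functions φ : ℝ^d → ℝ and let G be the class of bounded Borel measurable functions g : ℝ^d → ℝ, and define the Lagrangian L[φ, g] = ∫ g(∇φ(x)) dμ(x) − ∫ e^{g(y)} dν(y). Then there is no duality gap: inf_{φ ∈ Φ} sup_{g ∈ G} L[φ, g] = sup_{g ∈ G} inf_{φ ∈ Φ} L[φ, g] = −1, with the primal infimum attained at φ₀ and the dual supremum attained at g ≡ 0. -/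
open MeasureTheory

/-- No duality gap.  Let `μ, ν` be probability measures on `ℝ^d` with `μ` absolutely
continuous with respect to Lebesgue measure, and suppose a convex, everywhere
differentiable `φ₀` satisfies `(∇φ₀)_# μ = ν`.  With
`L[φ, g] = ∫ g (∇φ x) dμ - ∫ e^(g y) dν`, `Φ` the convex differentiable potentials and
`G` the bounded Borel measurable functions, one has
`⨅_{φ ∈ Φ} ⨆_{g ∈ G} L[φ, g] = ⨆_{g ∈ G} ⨅_{φ ∈ Φ} L[φ, g] = -1`, with the primal
infimum attained at `φ₀` and the dual supremum attained at `g ≡ 0`. -/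
theorem no_duality_gap {d : ℕ}
    (μ ν : Measure (EuclideanSpace ℝ (Fin d)))
    [IsProbabilityMeasure μ] [IsProbabilityMeasure ν]
    (hμ : μ ≪ volume)
    (φ₀ : EuclideanSpace ℝ (Fin d) → ℝ)
    (h0conv : ConvexOn ℝ Set.univ φ₀) (h0diff : Differentiable ℝ φ₀)
    (hpush : Measure.map (gradient φ₀) μ = ν) :
    let Φ := {φ : EuclideanSpace ℝ (Fin d) → ℝ //
      ConvexOn ℝ Set.univ φ ∧ Differentiable ℝ φ}
    let G := {g : EuclideanSpace ℝ (Fin d) → ℝ //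
      Measurable g ∧ ∃ C, ∀ y, |g y| ≤ C}
    let L : (EuclideanSpace ℝ (Fin d) → ℝ) → (EuclideanSpace ℝ (Fin d) → ℝ) → ℝ :=
      fun φ g => ∫ x, g (gradient φ x) ∂μ - ∫ y, Real.exp (g y) ∂ν
    (⨅ φ : Φ, ⨆ g : G, ((L φ.1 g.1 : ℝ) : EReal)) = -1 ∧
    (⨆ g : G, ⨅ φ : Φ, ((L φ.1 g.1 : ℝ) : EReal)) = -1 ∧
    (⨆ g : G, ((L φ₀ g.1 : ℝ) : EReal)) = -1 ∧
    (⨅ φ : Φ, ((L φ.1 (fun _ => 0) : ℝ) : EReal)) = -1 := by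
  intro Φ G L
  have hgrad : Measurable (gradient φ₀) := by
    have h1 : Measurable (fderiv ℝ φ₀) := measurable_fderiv ℝ φ₀
    exact ((InnerProductSpace.toDual ℝ
      (EuclideanSpace ℝ (Fin d))).symm.continuous.measurable).comp h1
  let zeroG : G := ⟨fun _ => 0, measurable_const, 0, fun y => by simp⟩
  let phi0Φ : Φ := ⟨φ₀, h0conv, h0diff⟩
  have hL0 : ∀ φ : EuclideanSpace ℝ (Fin d) → ℝ, L φ (fun _ => 0) = -1 := by
    intro φ
    simp [L, Real.exp_zero]
  have key : ∀ g : G, L φ₀ g.1 ≤ -1 := by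
    rintro ⟨g, hg, C, hC⟩
    have hmap : ∫ x, g (gradient φ₀ x) ∂μ = ∫ y, g y ∂ν := by
      rw [← hpush, integral_map hgrad.aemeasurable hg.aestronglyMeasurable]
    have hintg : Integrable g ν :=
      (integrable_const C).mono' hg.aestronglyMeasurable
        (Filter.Eventually.of_forall fun y => by simpa [Real.norm_eq_abs] using hC y)
    have hinte : Integrable (fun y => Real.exp (g y)) ν :=
      (integrable_const (Real.exp C)).mono'
        ((Real.continuous_exp.measurable.comp hg).aestronglyMeasurable)
        (Filter.Eventually.of_forall fun y => by
          have := (abs_le.mp (hC y)).2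
          simp [Real.norm_eq_abs, abs_of_pos (Real.exp_pos _), Real.exp_le_exp, this])
    have : L φ₀ g = ∫ y, (g y - Real.exp (g y)) ∂ν := by
      simp only [L, hmap]
      rw [integral_sub hintg hinte]
    rw [this]
    calc ∫ y, (g y - Real.exp (g y)) ∂ν ≤ ∫ _, (-1 : ℝ) ∂ν := by
          refine integral_mono (hintg.sub hinte) (integrable_const _) fun y => ?_
          have := Real.add_one_le_exp (g y)
          simp only
          linarith
      _ = -1 := by simp
  have hcoe : ((-1 : ℝ) : EReal) = -1 := by norm_num
  have goal3 : (⨆ g : G, ((L φ₀ g.1 : ℝ) : EReal)) = -1 := by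
    apply le_antisymm
    · exact iSup_le fun g => by rw [← hcoe]; exact_mod_cast key g
    · refine le_iSup_of_le zeroG (le_of_eq (Eq.symm ?_))
      show ((L φ₀ (fun _ => 0) : ℝ) : EReal) = -1
      rw [hL0 φ₀, hcoe]
  have goal4 : (⨅ φ : Φ, ((L φ.1 (fun _ => 0) : ℝ) : EReal)) = -1 := by
    have : ∀ φ : Φ, ((L φ.1 (fun _ => 0) : ℝ) : EReal) = -1 := fun φ => by
      rw [hL0 φ.1, hcoe]
    rw [iInf_congr this]
    have : Nonempty Φ := ⟨phi0Φ⟩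
    exact iInf_const
  refine ⟨?_, ?_, goal3, goal4⟩
  · apply le_antisymm
    · refine iInf_le_of_le phi0Φ ?_
      show (⨆ g : G, ((L φ₀ g.1 : ℝ) : EReal)) ≤ -1
      exact le_of_eq goal3
    · refine le_iInf fun φ => ?_
      refine le_iSup_of_le zeroG (le_of_eq (Eq.symm ?_))
      show ((L φ.1 (fun _ => 0) : ℝ) : EReal) = -1
      rw [hL0 φ.1, hcoe]
  · apply le_antisymm
    · refine iSup_le fun g => iInf_le_of_le phi0Φ ?_
      show ((L φ₀ g.1 : ℝ) : EReal) ≤ -1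
      rw [← hcoe]; exact_mod_cast key g
    · refine le_iSup_of_le zeroG ?_
      show -1 ≤ (⨅ φ : Φ, ((L φ.1 (fun _ => 0) : ℝ) : EReal))
      exact le_of_eq goal4.symm
end
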